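/- Let a ∈ ℝ², let d ∈ ℝ² be a unit vector, let φ ∈ (0, π/3] and Δ ∈ (0, 1]. Then the diameter of the drawing hull H(a,d,φ,Δ) (i.e., the supremum of distances between pairs of its points) equals Δ. -/

import Mathlib

open Real Set

/-- Map an angle in `(-π, π]` (as returned by `Complex.arg`) to `[0, 2π)`. -/
noncomputable def toCCW (θ : ℝ) : ℝ := if 0 ≤ θ then θ else θ + 2 * Real.pi

/-- The counterclockwise angle from `w` to `z` (as vectors in `ℝ² = ℂ`), in `[0, 2π)`. -/
noncomputable def ccwAngle (w z : ℂ) : ℝ := toCCW ((z / w).arg)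

/-- The drawing hull `H(a, d, φ, Δ)`: all points within distance `Δ` of the anchor `a`
whose counterclockwise angle (measured from direction `d`) lies in `[0, φ)`,
together with the anchor itself. -/
noncomputable def dhull (a d : ℂ) (φ Δ : ℝ) : Set ℂ :=
  {a} ∪ {x : ℂ | dist x a ≤ Δ ∧ ccwAngle d (x - a) ∈ Set.Ico 0 φ}

lemma normSq_rexp_sub (r s θ₁ θ₂ : ℝ) :
    Complex.normSq ((r:ℂ) * Complex.exp (θ₁ * Complex.I) - (s:ℂ) * Complex.exp (θ₂ * Complex.I))
      = r^2 + s^2 - 2*r*s*Real.cos (θ₁ - θ₂) := by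
  simp [Complex.normSq_apply, Complex.exp_mul_I, Real.cos_sub,
    Complex.cos_ofReal_re, Complex.sin_ofReal_re]
  nlinarith [Real.sin_sq_add_cos_sq θ₁, Real.sin_sq_add_cos_sq θ₂]

lemma arg_mem_of_ccw {θ φ : ℝ} (hθ : -Real.pi < θ) (hφ : φ ≤ π / 3)
    (h : toCCW θ ∈ Set.Ico 0 φ) : θ ∈ Set.Ico 0 φ := by
  have hπ := Real.pi_pos
  unfold toCCW at h
  by_cases h0 : 0 ≤ θ
  · simpa [h0] using h
  · exfalso
    rw [if_neg h0] at h
    have := h.2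
    linarith

/-- For an anchor `a`, a unit direction `d`, a span `φ ∈ (0, π/3]` and a
diameter parameter `Δ ∈ (0, 1]`, the metric diameter of the drawing hull `H(a, d, φ, Δ)`
equals `Δ`. -/
theorem drawing_hull_diam (a d : ℂ) (hd : ‖d‖ = 1) (φ Δ : ℝ)
    (hφ : φ ∈ Set.Ioc 0 (π / 3)) (hΔ : Δ ∈ Set.Ioc (0 : ℝ) 1) :
    Metric.diam (dhull a d φ Δ) = Δ := by
  obtain ⟨hφ0, hφπ⟩ := hφ
  obtain ⟨hΔ0, hΔ1⟩ := hΔ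
  have hπ := Real.pi_pos
  have hd' : ‖d‖ = 1 := hd
  have hd0 : d ≠ 0 := by
    intro h; rw [h] at hd'; simp at hd'
  -- distances within the hull are at most Δ
  have key : ∀ x ∈ dhull a d φ Δ, ∀ y ∈ dhull a d φ Δ, dist x y ≤ Δ := by
    have hmem : ∀ x ∈ dhull a d φ Δ, dist x a ≤ Δ := by
      rintro x (rfl | hx)
      · simp [hΔ0.le]
      · exact hx.1
    intro x hx y hy
    rcases hx with rfl | hx
    · rw [dist_comm]; exact hmem y hy
    rcases hy with rfl | hy
    · exact hmem x (Or.inr hx)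
    -- both in the sector
    set α := ((x - a) / d).arg with hα
    set β := ((y - a) / d).arg with hβ
    have hαm : α ∈ Set.Ico 0 φ :=
      arg_mem_of_ccw (Complex.neg_pi_lt_arg _) hφπ hx.2
    have hβm : β ∈ Set.Ico 0 φ :=
      arg_mem_of_ccw (Complex.neg_pi_lt_arg _) hφπ hy.2
    set r := ‖(x - a) / d‖ with hr
    set s := ‖(y - a) / d‖ with hs
    have hrΔ : r ≤ Δ := by
      rw [hr, norm_div, hd', div_one]
      exact (dist_eq_norm x a) ▸ hx.1
    have hsΔ : s ≤ Δ := by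
      rw [hs, norm_div, hd', div_one]
      exact (dist_eq_norm y a) ▸ hy.1
    have hr0 : 0 ≤ r := norm_nonneg _
    have hs0 : 0 ≤ s := norm_nonneg _
    have hux : (x - a) / d = (r:ℂ) * Complex.exp (α * Complex.I) :=
      (Complex.norm_mul_exp_arg_mul_I _).symm
    have huy : (y - a) / d = (s:ℂ) * Complex.exp (β * Complex.I) :=
      (Complex.norm_mul_exp_arg_mul_I _).symm
    have hdist : dist x y ^ 2 = r^2 + s^2 - 2*r*s*Real.cos (α - β) := by
      have h1 : x - y = ((x - a)/d - (y - a)/d) * d := by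
        field_simp
        ring
      have : dist x y = ‖(x - a)/d - (y - a)/d‖ := by
        rw [Complex.dist_eq, h1, norm_mul, hd', mul_one]
      rw [this, ← normSq_rexp_sub r s α β, ← hux, ← huy, Complex.sq_norm]
    -- cosine bound
    have habs : |α - β| ≤ π / 3 := by
      rw [abs_le]
      constructor <;> [linarith [hαm.1, hβm.2]; linarith [hαm.2, hβm.1]]
    have hcos : (1:ℝ)/2 ≤ Real.cos (α - β) := by
      rw [← Real.cos_abs]
      calc (1:ℝ)/2 = Real.cos (π/3) := by rw [Real.cos_pi_div_three]
        _ ≤ Real.cos |α - β| :=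
          Real.cos_le_cos_of_nonneg_of_le_pi (abs_nonneg _) (by linarith) habs
    have hsq : dist x y ^ 2 ≤ Δ ^ 2 := by
      rw [hdist]
      nlinarith [mul_nonneg hr0 hs0, mul_nonneg (sub_nonneg.2 hrΔ) (sub_nonneg.2 hsΔ)]
    nlinarith [dist_nonneg (x := x) (y := y)]
  -- membership of the two extreme points
  have ha : a ∈ dhull a d φ Δ := Or.inl rfl
  have hbd : dist (a + (Δ:ℂ) * d) a = Δ := by
    rw [dist_eq_norm]
    simp [norm_mul, hd, abs_of_pos hΔ0]
  have hb : a + (Δ:ℂ) * d ∈ dhull a d φ Δ := by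
    right
    refine ⟨hbd.le, ?_⟩
    have h1 : (a + (Δ:ℂ) * d - a) / d = (Δ:ℂ) := by
      field_simp
      ring
    show toCCW ((((a + (Δ:ℂ) * d) - a) / d).arg) ∈ Set.Ico 0 φ
    rw [h1, Complex.arg_ofReal_of_nonneg hΔ0.le]
    simp [toCCW, hφ0]
  -- bounded
  have hbdd : Bornology.IsBounded (dhull a d φ Δ) := by
    apply (Metric.isBounded_closedBall (x := a) (r := Δ)).subset
    intro z hz
    rcases hz with rfl | hz
    · exact Metric.mem_closedBall.2 (by simp [hΔ0.le])
    · exact Metric.mem_closedBall.2 hz.1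
  refine le_antisymm (Metric.diam_le_of_forall_dist_le hΔ0.le key) ?_
  have := Metric.dist_le_diam_of_mem hbdd hb ha
  rwa [hbd] at this
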